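/- For any positive integer n and any unit Euclidean norm vectors u_1, …, u_{2n} ∈ ℝ^n, there exist indices 1 ≤ i ≠ j ≤ 2n with |⟨u_i,u_j⟩| > 1/(2√n). -/

import Mathlib

/-- For any `2n` unit vectors in `ℝⁿ`, some pair of distinct
vectors has `|⟨uᵢ,uⱼ⟩| > 1/(2√n)`. -/
theorem exists_pair_inner_gt
    (n : ℕ) (hn : 0 < n) (u : Fin (2 * n) → (Fin n → ℝ))
    (hunit : ∀ i, ∑ k : Fin n, (u i k) ^ 2 = 1) :
    ∃ i j : Fin (2 * n), i ≠ j ∧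
      1 / (2 * Real.sqrt n) < |∑ k : Fin n, u i k * u j k| := by
  by_contra hcon
  push_neg at hcon
  have hn' : (0:ℝ) < n := by exact_mod_cast hn
  set c : Fin (2*n) → Fin (2*n) → ℝ := fun i j => ∑ k, u i k * u j k with hc
  have hdiag : ∀ i, c i i = 1 := by
    intro i; simp only [hc]; simp_rw [← sq]; exact hunit i
  have hbound : ∀ i j, i ≠ j → (c i j)^2 ≤ 1/(4*n) := by
    intro i j hij
    have h2 : |c i j| ≤ 1/(2*Real.sqrt n) := hcon i j hij
    calc (c i j)^2 = |c i j|^2 := (sq_abs _).symm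
      _ ≤ (1/(2*Real.sqrt n))^2 := by
          apply pow_le_pow_left₀ (abs_nonneg _) h2
      _ = 1/(4*n) := by
          rw [div_pow, mul_pow, Real.sq_sqrt hn'.le]; norm_num
  -- key identity
  have key : (∑ i, ∑ j, (c i j)^2)
      = ∑ k : Fin n, ∑ l : Fin n, (∑ i, u i k * u i l)^2 := by
    have expand : ∀ k l : Fin n, (∑ i, u i k * u i l)^2
        = ∑ i, ∑ j, (u i k * u i l) * (u j k * u j l) := by
      intro k l; rw [sq, Finset.sum_mul_sum]
    have expand2 : ∀ i j, (c i j)^2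
        = ∑ k : Fin n, ∑ l : Fin n, (u i k * u i l) * (u j k * u j l) := by
      intro i j
      simp only [hc]
      rw [sq, Finset.sum_mul_sum]
      apply Finset.sum_congr rfl; intro k _
      apply Finset.sum_congr rfl; intro l _
      ring
    simp_rw [expand, expand2]
    rw [show (∑ i, ∑ j, ∑ k : Fin n, ∑ l : Fin n, (u i k * u i l) * (u j k * u j l))
        = ∑ p : Fin (2*n) × Fin (2*n), ∑ q : Fin n × Fin n,
            (u p.1 q.1 * u p.1 q.2) * (u p.2 q.1 * u p.2 q.2) by
      simp [Fintype.sum_prod_type]]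
    rw [Finset.sum_comm]
    simp [Fintype.sum_prod_type]
  -- lower bound
  have htrace : (∑ k : Fin n, ∑ i, u i k * u i k) = 2*n := by
    rw [Finset.sum_comm]
    have : ∀ i, (∑ k : Fin n, u i k * u i k) = 1 := by
      intro i; simp_rw [← sq]; exact hunit i
    simp [this]
  have hlow : (4:ℝ)*n ≤ ∑ i, ∑ j, (c i j)^2 := by
    rw [key]
    have h1 : ((2:ℝ)*n)^2 ≤ n * ∑ k : Fin n, (∑ i, u i k * u i k)^2 := by
      have := sq_sum_le_card_mul_sum_sq (s := Finset.univ)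
        (f := fun k : Fin n => ∑ i, u i k * u i k)
      simpa [htrace] using this
    have h2 : (∑ k : Fin n, (∑ i, u i k * u i k)^2)
        ≤ ∑ k : Fin n, ∑ l : Fin n, (∑ i, u i k * u i l)^2 := by
      apply Finset.sum_le_sum
      intro k _
      exact Finset.single_le_sum (f := fun l => (∑ i, u i k * u i l)^2)
        (fun l _ => sq_nonneg _) (Finset.mem_univ k)
    nlinarith [h1, h2]
  -- upper bound
  have hup : (∑ i, ∑ j, (c i j)^2) ≤ 3*n := by
    have hstep : ∀ i : Fin (2*n), (∑ j, (c i j)^2) ≤ 3/2 := by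
      intro i
      have : (∑ j, (c i j)^2)
          ≤ ∑ j, ((1:ℝ)/(4*n) + if i = j then (1:ℝ) - 1/(4*(n:ℝ)) else 0) := by
        apply Finset.sum_le_sum
        intro j _
        by_cases hij : i = j
        · subst hij; simp [hdiag i]
        · simp only [hij, if_false, add_zero]
          exact hbound i j hij
      rw [Finset.sum_add_distrib] at this
      simp only [Finset.sum_const, Finset.card_univ, Fintype.card_fin,
        Finset.sum_ite_eq, Finset.mem_univ, if_true, nsmul_eq_mul] at this
      have h14 : (0:ℝ) < 1/(4*n) := by positivity
      have h4 : (1:ℝ)/(4*n) ≤ 1/4 := by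
        have h1n : (1:ℝ) ≤ n := by exact_mod_cast hn
        apply div_le_div_of_nonneg_left (by norm_num) (by norm_num)
        linarith
      calc (∑ j, (c i j)^2) ≤ (2*n : ℕ) * (1/(4*n)) + (1 - 1/(4*n)) := this
        _ = 1/2 + 1 - 1/(4*n) := by
            field_simp
            push_cast; ring
        _ ≤ 3/2 := by linarith
    calc (∑ i, ∑ j, (c i j)^2) ≤ ∑ i : Fin (2*n), (3/2:ℝ) :=
          Finset.sum_le_sum (fun i _ => hstep i)
      _ = 3*n := by simp [Finset.sum_const]; ring
  nlinarith [hlow, hup]
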